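/- Let L̂ : Ω → 𝕍⁺ be such that ω ↦ L̂(ω)(t) is 𝓕-measurable for every t ∈ [0,T). For ℓ ∈ ℝ define τ_ℓ(ω) := inf{t ∈ [0,T) : L̂(ω)(t) ≥ ℓ} and τ'_ℓ(ω) := inf{t ∈ [0,T) : L̂(ω)(t) > ℓ}, with the convention inf ∅ := T. Then there exists a countable set 𝕃₀ ⊂ ℝ such that for every ℓ ∈ ℝ ∖ 𝕃₀ one has ℙ[τ_ℓ = τ'_ℓ] = 1. -/

import Mathlib

open MeasureTheory Filter Set Topology
open scoped Classical ENNReal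

noncomputable section

/-- The order topology on `ℝ ∪ {−∞}`. -/
instance : TopologicalSpace (WithBot ℝ) := Preorder.topology _
instance : OrderTopology (WithBot ℝ) := ⟨rfl⟩
/-- The Borel σ-algebra on `ℝ ∪ {−∞}`. -/
instance : MeasurableSpace (WithBot ℝ) := borel _

instance : BorelSpace (WithBot ℝ) := ⟨rfl⟩

/-- Membership in the space `𝕍⁺` of nondecreasing, left-continuous functions
`v : [0,T) → ℝ ∪ {−∞}` with `v 0 = −∞` and `v` real-valued on `(0,T)`
(encoded as functions `ℝ → WithBot ℝ`, normalized to `⊥` outside `(0,T)`;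
left-continuity of a nondecreasing function is expressed in order-theoretic
terms: `v t` is the least upper bound of the values of `v` on `[0,t)`). -/
def InVPlus (T : ℝ) (v : ℝ → WithBot ℝ) : Prop :=
  (∀ t : ℝ, t ∉ Set.Ioo 0 T → v t = ⊥) ∧
  (∀ s t : ℝ, 0 ≤ s → s ≤ t → t < T → v s ≤ v t) ∧
  (∀ t : ℝ, t ∈ Set.Ioo 0 T → v t ≠ ⊥) ∧
  (∀ t : ℝ, t ∈ Set.Ioo 0 T → IsLUB (v '' Set.Ico 0 t) (v t))

section Aux

variable {Ω : Type*} [MeasurableSpace Ω]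

/-- Generalized first hitting time of an upper set `C` of values. -/
def tauC (T : ℝ) (Lh : Ω → ℝ → WithBot ℝ) (C : Set (WithBot ℝ)) (ω : Ω) : ℝ :=
  sInf (insert T {t : ℝ | 0 ≤ t ∧ t < T ∧ Lh ω t ∈ C})

lemma tauC_bddBelow (T : ℝ) (hT : 0 < T) (Lh : Ω → ℝ → WithBot ℝ)
    (C : Set (WithBot ℝ)) (ω : Ω) :
    BddBelow (insert T {t : ℝ | 0 ≤ t ∧ t < T ∧ Lh ω t ∈ C}) := by
  refine ⟨0, ?_⟩
  rintro x (rfl | hx)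
  · exact hT.le
  · exact hx.1

lemma tauC_nonneg (T : ℝ) (hT : 0 < T) (Lh : Ω → ℝ → WithBot ℝ)
    (C : Set (WithBot ℝ)) (ω : Ω) : 0 ≤ tauC T Lh C ω := by
  refine le_csInf ⟨T, mem_insert _ _⟩ ?_
  rintro x (rfl | hx)
  · exact hT.le
  · exact hx.1

lemma tauC_le_T (T : ℝ) (hT : 0 < T) (Lh : Ω → ℝ → WithBot ℝ)
    (C : Set (WithBot ℝ)) (ω : Ω) : tauC T Lh C ω ≤ T :=
  csInf_le (tauC_bddBelow T hT Lh C ω) (mem_insert _ _)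

lemma tauC_anti (T : ℝ) (hT : 0 < T) (Lh : Ω → ℝ → WithBot ℝ)
    {C C' : Set (WithBot ℝ)} (h : C ⊆ C') (ω : Ω) :
    tauC T Lh C' ω ≤ tauC T Lh C ω := by
  refine csInf_le_csInf (tauC_bddBelow T hT Lh C' ω) ⟨T, mem_insert _ _⟩ ?_
  rintro x (rfl | hx)
  · exact mem_insert _ _
  · exact mem_insert_of_mem _ ⟨hx.1, hx.2.1, h hx.2.2⟩

/-- Key identity: the (ENNReal-valued) hitting time is a countable infimum over
rational times. -/
lemma ofReal_tauC_eq (T : ℝ) (hT : 0 < T) (Lh : Ω → ℝ → WithBot ℝ)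
    (hmem : ∀ ω, InVPlus T (Lh ω))
    (C : Set (WithBot ℝ)) (hC : ∀ a b : WithBot ℝ, a ∈ C → a ≤ b → b ∈ C) (ω : Ω) :
    ENNReal.ofReal (tauC T Lh C ω)
      = ⨅ q : {q : ℚ // 0 < (q : ℝ) ∧ (q : ℝ) < T},
          (if Lh ω (q : ℝ) ∈ C then ENNReal.ofReal (q : ℝ) else ENNReal.ofReal T) := by
  obtain ⟨q0, hq0⟩ := exists_rat_btwn hT
  haveI : Nonempty {q : ℚ // 0 < (q : ℝ) ∧ (q : ℝ) < T} := ⟨⟨q0, hq0⟩⟩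
  refine le_antisymm (le_iInf fun q => ?_) ?_
  · split_ifs with h
    · refine ENNReal.ofReal_le_ofReal ?_
      exact csInf_le (tauC_bddBelow T hT Lh C ω)
        (mem_insert_of_mem _ ⟨q.2.1.le, q.2.2, h⟩)
    · exact ENNReal.ofReal_le_ofReal (tauC_le_T T hT Lh C ω)
  · refine ENNReal.le_of_forall_pos_le_add fun ε hε _ => ?_
    have hτ0 : 0 ≤ tauC T Lh C ω := tauC_nonneg T hT Lh C ω
    have hεR : (0 : ℝ) < (ε : ℝ) := hε
    have hsum : ENNReal.ofReal (tauC T Lh C ω + (ε : ℝ))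
        = ENNReal.ofReal (tauC T Lh C ω) + ε := by
      rw [ENNReal.ofReal_add hτ0 hεR.le, ENNReal.ofReal_coe_nnreal]
    rw [← hsum]
    by_cases hcase : T ≤ tauC T Lh C ω + (ε : ℝ)
    · refine le_trans (iInf_le _ ⟨q0, hq0⟩) ?_
      refine le_trans ?_ (ENNReal.ofReal_le_ofReal hcase)
      split_ifs with h
      · exact ENNReal.ofReal_le_ofReal hq0.2.le
      · exact le_rfl
    · push_neg at hcase
      have hlt : tauC T Lh C ω < tauC T Lh C ω + (ε : ℝ) := by linarith
      have := (csInf_lt_iff (tauC_bddBelow T hT Lh C ω) ⟨T, mem_insert _ _⟩).1 hlt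
      obtain ⟨x, hx, hxlt⟩ := this
      rcases hx with rfl | hx
      · exact absurd hxlt (not_lt.2 hcase.le)
      · obtain ⟨q, hq1, hq2⟩ := exists_rat_btwn hxlt
        have hq0' : 0 < (q : ℝ) := lt_of_le_of_lt hx.1 hq1
        have hqT : (q : ℝ) < T := lt_trans hq2 hcase
        have hmemq : Lh ω (q : ℝ) ∈ C :=
          hC _ _ hx.2.2 ((hmem ω).2.1 x q hx.1 hq1.le hqT)
        refine le_trans (iInf_le _ ⟨q, hq0', hqT⟩) ?_
        rw [if_pos hmemq]
        exact ENNReal.ofReal_le_ofReal hq2.le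

lemma measurable_ofReal_tauC (T : ℝ) (hT : 0 < T) (Lh : Ω → ℝ → WithBot ℝ)
    (hmem : ∀ ω, InVPlus T (Lh ω))
    (hmeas : ∀ t : ℝ, 0 ≤ t → t < T → Measurable fun ω => Lh ω t)
    (C : Set (WithBot ℝ)) (hCm : MeasurableSet C)
    (hC : ∀ a b : WithBot ℝ, a ∈ C → a ≤ b → b ∈ C) :
    Measurable fun ω => ENNReal.ofReal (tauC T Lh C ω) := by
  have : (fun ω => ENNReal.ofReal (tauC T Lh C ω))
      = fun ω => ⨅ q : {q : ℚ // 0 < (q : ℝ) ∧ (q : ℝ) < T},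
          (if Lh ω (q : ℝ) ∈ C then ENNReal.ofReal (q : ℝ) else ENNReal.ofReal T) := by
    funext ω; exact ofReal_tauC_eq T hT Lh hmem C hC ω
  rw [this]
  refine Measurable.iInf fun q => ?_
  refine Measurable.ite ?_ measurable_const measurable_const
  exact (hmeas (q : ℝ) q.2.1.le q.2.2) hCm

end Aux

set_option maxHeartbeats 1000000 in
/-- **Only countably many bad levels (Proposition 3.3 (i)).** -/
theorem countably_many_bad_levels
    {Ω : Type*} [MeasurableSpace Ω] (P : Measure Ω) [IsProbabilityMeasure P]
    (T : ℝ) (hT : 0 < T)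
    (Lh : Ω → ℝ → WithBot ℝ)
    (hmem : ∀ ω, InVPlus T (Lh ω))
    (hmeas : ∀ t : ℝ, 0 ≤ t → t < T → Measurable fun ω => Lh ω t) :
    ∃ L0 : Set ℝ, L0.Countable ∧
      ∀ ℓ : ℝ, ℓ ∉ L0 →
        P {ω | sInf (insert T {t : ℝ | 0 ≤ t ∧ t < T ∧ (ℓ : WithBot ℝ) ≤ Lh ω t})
             = sInf (insert T {t : ℝ | 0 ≤ t ∧ t < T ∧ (ℓ : WithBot ℝ) < Lh ω t})} = 1 := by
  classical
  -- the two hitting times, as `tauC`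
  set τ : ℝ → Ω → ℝ := fun ℓ ω => tauC T Lh (Ici (ℓ : WithBot ℝ)) ω with hτdef
  set τ' : ℝ → Ω → ℝ := fun ℓ ω => tauC T Lh (Ioi (ℓ : WithBot ℝ)) ω with hτ'def
  have hset : ∀ (ℓ : ℝ) (ω : Ω),
      {t : ℝ | 0 ≤ t ∧ t < T ∧ (ℓ : WithBot ℝ) ≤ Lh ω t}
        = {t : ℝ | 0 ≤ t ∧ t < T ∧ Lh ω t ∈ Ici (ℓ : WithBot ℝ)} := by
    intro ℓ ω; rfl
  have hset' : ∀ (ℓ : ℝ) (ω : Ω),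
      {t : ℝ | 0 ≤ t ∧ t < T ∧ (ℓ : WithBot ℝ) < Lh ω t}
        = {t : ℝ | 0 ≤ t ∧ t < T ∧ Lh ω t ∈ Ioi (ℓ : WithBot ℝ)} := by
    intro ℓ ω; rfl
  -- measurable ENNReal versions
  set σ : ℝ → Ω → ℝ≥0∞ := fun ℓ ω => ENNReal.ofReal (τ ℓ ω) with hσdef
  set σ' : ℝ → Ω → ℝ≥0∞ := fun ℓ ω => ENNReal.ofReal (τ' ℓ ω) with hσ'def
  have hmσ : ∀ ℓ : ℝ, Measurable (σ ℓ) := fun ℓ =>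
    measurable_ofReal_tauC T hT Lh hmem hmeas _ isClosed_Ici.measurableSet
      (fun a b ha hab => le_trans ha hab)
  have hmσ' : ∀ ℓ : ℝ, Measurable (σ' ℓ) := fun ℓ =>
    measurable_ofReal_tauC T hT Lh hmem hmeas _ isOpen_Ioi.measurableSet
      (fun a b ha hab => lt_of_lt_of_le ha hab)
  -- pointwise comparisons
  have hle : ∀ (ℓ : ℝ) (ω : Ω), σ ℓ ω ≤ σ' ℓ ω := fun ℓ ω =>
    ENNReal.ofReal_le_ofReal
      (tauC_anti (C := Ioi (ℓ : WithBot ℝ)) (C' := Ici (ℓ : WithBot ℝ)) T hT Lh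
        Ioi_subset_Ici_self ω)
  have hle2 : ∀ (ℓ ℓ' : ℝ), ℓ < ℓ' → ∀ ω : Ω, σ' ℓ ω ≤ σ ℓ' ω := by
    intro ℓ ℓ' hℓ ω
    refine ENNReal.ofReal_le_ofReal
      (tauC_anti (C := Ici ((ℓ' : ℝ) : WithBot ℝ)) (C' := Ioi ((ℓ : ℝ) : WithBot ℝ)) T hT Lh ?_ ω)
    intro x hx
    exact lt_of_lt_of_le (by exact_mod_cast hℓ) (Set.mem_Ici.1 hx)
  -- integrals
  set F : ℝ → ℝ≥0∞ := fun ℓ => ∫⁻ ω, σ ℓ ω ∂P with hFdef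
  set G : ℝ → ℝ≥0∞ := fun ℓ => ∫⁻ ω, σ' ℓ ω ∂P with hGdef
  have hFG : ∀ ℓ, F ℓ ≤ G ℓ := fun ℓ => lintegral_mono (hle ℓ)
  have hGF : ∀ ℓ ℓ', ℓ < ℓ' → G ℓ ≤ F ℓ' := fun ℓ ℓ' h =>
    lintegral_mono (hle2 ℓ ℓ' h)
  have hGfin : ∀ ℓ, G ℓ ≤ ENNReal.ofReal T := by
    intro ℓ
    calc G ℓ ≤ ∫⁻ _, ENNReal.ofReal T ∂P :=
          lintegral_mono fun ω => ENNReal.ofReal_le_ofReal (tauC_le_T T hT Lh _ ω)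
      _ = ENNReal.ofReal T := by simp
  have hFfin : ∀ ℓ, F ℓ ≠ ∞ := fun ℓ =>
    ne_top_of_le_ne_top ENNReal.ofReal_ne_top (le_trans (hFG ℓ) (hGfin ℓ))
  -- the bad set
  refine ⟨{ℓ : ℝ | F ℓ ≠ G ℓ}, ?_, ?_⟩
  · -- countable: disjoint nonempty open intervals `(F ℓ, G ℓ)` in `ℝ≥0∞`
    refine Set.PairwiseDisjoint.countable_of_isOpen
      (s := fun ℓ => Ioo (F ℓ) (G ℓ)) ?_ (fun ℓ _ => isOpen_Ioo) ?_
    · intro a ha b hb hab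
      rcases lt_or_gt_of_ne hab with h | h
      · exact Set.disjoint_left.2 fun x hxa hxb =>
          lt_irrefl x (hxa.2.trans ((hGF a b h).trans_lt hxb.1))
      · exact Set.disjoint_left.2 fun x hxa hxb =>
          lt_irrefl x (hxb.2.trans ((hGF b a h).trans_lt hxa.1))
    · intro ℓ hℓ
      exact nonempty_Ioo.2 (lt_of_le_of_ne (hFG ℓ) hℓ)
  · -- good levels
    intro ℓ hℓ
    have hFGe : F ℓ = G ℓ := not_not.1 hℓ
    -- a.e. equality of σ and σ'
    have hzero : ∫⁻ ω, (σ' ℓ ω - σ ℓ ω) ∂P = 0 := by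
      rw [lintegral_sub (hmσ ℓ) (hFfin ℓ) (Filter.Eventually.of_forall (hle ℓ))]
      exact tsub_eq_zero_iff_le.2 hFGe.ge
    have hae : ∀ᵐ ω ∂P, σ' ℓ ω - σ ℓ ω = 0 := by
      have := (lintegral_eq_zero_iff ((hmσ' ℓ).sub (hmσ ℓ))).1 hzero
      filter_upwards [this] with ω h using h
    have haeEq : ∀ᵐ ω ∂P, τ ℓ ω = τ' ℓ ω := by
      filter_upwards [hae] with ω h
      have h1 : σ' ℓ ω ≤ σ ℓ ω := tsub_eq_zero_iff_le.1 h
      have h2 : σ ℓ ω = σ' ℓ ω := le_antisymm (hle ℓ ω) h1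
      have := (ENNReal.ofReal_eq_ofReal_iff (tauC_nonneg T hT Lh _ ω)
        (tauC_nonneg T hT Lh _ ω)).1 h2
      exact this
    -- convert a.e. equality to probability one
    set s : Set Ω := {ω | sInf (insert T {t : ℝ | 0 ≤ t ∧ t < T ∧ (ℓ : WithBot ℝ) ≤ Lh ω t})
        = sInf (insert T {t : ℝ | 0 ≤ t ∧ t < T ∧ (ℓ : WithBot ℝ) < Lh ω t})} with hsdef
    have hsc : P sᶜ = 0 := by
      rw [ae_iff] at haeEq
      convert haeEq using 2
      rfl
    have h1 : (1 : ℝ≥0∞) ≤ P s := by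
      have : P Set.univ ≤ P s + P sᶜ := by
        rw [← Set.union_compl_self s]
        exact measure_union_le s sᶜ
      rwa [measure_univ, hsc, add_zero] at this
    exact le_antisymm prob_le_one h1
end
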